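/- A function φ : ℝ^d → ℝ belongs to ABV(ℝ^d) if and only if there exist functions φ₁, φ₂ : ℝ^d → ℝ, each increasing with respect to the coordinatewise order, such that φ = φ₁ − φ₂. -/

import Mathlib

open Set

/-- A curve `γ : [0,1] → ℝ^d` whose coordinates are each monotone nondecreasing on `[0,1]`
and take values in the box `∏ [a i, b i]`. -/
def CoordMonotoneCurveInto {d : ℕ} (γ : ℝ → (Fin d → ℝ)) (a b : Fin d → ℝ) : Prop :=
  (∀ i, MonotoneOn (fun t => γ t i) (Set.Icc (0 : ℝ) 1)) ∧
  (∀ t ∈ Set.Icc (0 : ℝ) 1, ∀ i, γ t i ∈ Set.Icc (a i) (b i))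

/-- `φ ∈ ABV(ℝ^d)`: for every closed box `Q = ∏ [a i, b i]`, the supremum over all
coordinatewise monotone curves `γ : [0,1] → Q` of the total variation of `φ ∘ γ` on
`[0,1]` is finite. -/
def MemABV {d : ℕ} (φ : (Fin d → ℝ) → ℝ) : Prop :=
  ∀ a b : Fin d → ℝ, a ≤ b →
    (⨆ γ : {γ : ℝ → (Fin d → ℝ) // CoordMonotoneCurveInto γ a b},
      eVariationOn (φ ∘ γ.1) (Set.Icc (0 : ℝ) 1)) < ⊤

namespace Stmt1Aux

variable {d : ℕ}

/-- The set of "positive chain sums" of `φ` over monotone chains from `p` to `q`. -/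
def chainSet (φ : (Fin d → ℝ) → ℝ) (p q : Fin d → ℝ) : Set ℝ :=
  {s | ∃ (n : ℕ) (z : ℕ → (Fin d → ℝ)), Monotone z ∧ z 0 = p ∧ (∀ k, n ≤ k → z k = q) ∧
    s = ∑ k ∈ Finset.range n, max (φ (z (k + 1)) - φ (z k)) 0}

/-- The supremum of positive chain sums from `p` to `q`. -/
noncomputable def Pfun (φ : (Fin d → ℝ) → ℝ) (p q : Fin d → ℝ) : ℝ :=
  sSup (chainSet φ p q)

lemma chainSet_nonempty (φ : (Fin d → ℝ) → ℝ) {p q : Fin d → ℝ} (hpq : p ≤ q) :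
    (chainSet φ p q).Nonempty := by
  refine ⟨max (φ q - φ p) 0, 1, fun k => if k = 0 then p else q, ?_, by simp, ?_, ?_⟩
  · intro j k hjk
    dsimp only
    split_ifs with hj hk hk
    · exact le_rfl
    · exact hpq
    · exact ((hj (Nat.le_zero.mp (hk ▸ hjk))).elim)
    · exact le_rfl
  · intro k hk
    simp only [if_neg (by omega : ¬ k = 0)]
  · simp

lemma chainSet_le (φ : (Fin d → ℝ) → ℝ) (h : MemABV φ) {p q : Fin d → ℝ} (hpq : p ≤ q) :
    ∀ s ∈ chainSet φ p q,
      s ≤ (⨆ γ : {γ : ℝ → (Fin d → ℝ) // CoordMonotoneCurveInto γ p q},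
        eVariationOn (φ ∘ γ.1) (Set.Icc (0 : ℝ) 1)).toReal := by
  rintro s ⟨n, z, hz, hz0, hzn, rfl⟩
  have hzq : ∀ k, z k ≤ q := by
    intro k
    rcases le_or_gt n k with hk | hk
    · exact (hzn k hk).le
    · rw [← hzn n le_rfl]; exact hz hk.le
  have hzp : ∀ k, p ≤ z k := fun k => hz0 ▸ hz (Nat.zero_le k)
  rcases Nat.eq_zero_or_pos n with hn | hn
  · subst hn; simpa using ENNReal.toReal_nonneg
  -- the step curve associated to the chain
  set γ : ℝ → (Fin d → ℝ) := fun t => z ⌊t * n⌋₊ with hγ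
  have hγprop : CoordMonotoneCurveInto γ p q := by
    constructor
    · intro i t ht t' ht' htt'
      exact hz (Nat.floor_mono (mul_le_mul_of_nonneg_right htt' (Nat.cast_nonneg n))) i
    · intro t ht i
      exact ⟨hzp _ i, hzq _ i⟩
  have hnR : (0:ℝ) < n := by exact_mod_cast hn
  set u : ℕ → ℝ := fun k => ((min k n : ℕ) : ℝ) / n with hu
  have humono : Monotone u := by
    intro j k hjk
    have hc : ((min j n : ℕ):ℝ) ≤ ((min k n : ℕ):ℝ) := by
      exact_mod_cast Nat.cast_le.mpr (min_le_min hjk le_rfl)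
    exact (div_le_div_iff_of_pos_right hnR).mpr hc
  have humem : ∀ k, u k ∈ Set.Icc (0:ℝ) 1 := by
    intro k
    constructor
    · positivity
    · rw [div_le_one hnR]
      exact_mod_cast Nat.cast_le.mpr (min_le_right k n)
  have hγu : ∀ k, γ (u k) = z (min k n) := by
    intro k
    have : u k * n = ((min k n : ℕ) : ℝ) := div_mul_cancel₀ _ hnR.ne'
    rw [hγ]
    simp only [this, Nat.floor_natCast]
  have key : (∑ k ∈ Finset.range n, edist (φ (z (k + 1))) (φ (z k)))
      ≤ eVariationOn (φ ∘ γ) (Set.Icc (0:ℝ) 1) := by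
    have h1 : (∑ k ∈ Finset.range n, edist (φ (z (k + 1))) (φ (z k)))
        = ∑ k ∈ Finset.range n, edist ((φ ∘ γ) (u (k + 1))) ((φ ∘ γ) (u k)) := by
      refine Finset.sum_congr rfl ?_
      intro k hk
      have hk' := Finset.mem_range.mp hk
      have e1 : min (k + 1) n = k + 1 := min_eq_left (by omega)
      have e2 : min k n = k := min_eq_left (by omega)
      simp only [Function.comp_apply, hγu, e1, e2]
    rw [h1]
    exact eVariationOn.sum_le (f := φ ∘ γ) (n := n) humono (fun k => humem k)
  have hfin : (⨆ γ : {γ : ℝ → (Fin d → ℝ) // CoordMonotoneCurveInto γ p q},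
      eVariationOn (φ ∘ γ.1) (Set.Icc (0 : ℝ) 1)) ≠ ⊤ := (h p q hpq).ne
  have h2 : ENNReal.ofReal (∑ k ∈ Finset.range n, |φ (z (k + 1)) - φ (z k)|)
      ≤ (⨆ γ : {γ : ℝ → (Fin d → ℝ) // CoordMonotoneCurveInto γ p q},
        eVariationOn (φ ∘ γ.1) (Set.Icc (0 : ℝ) 1)) := by
    rw [ENNReal.ofReal_sum_of_nonneg (fun _ _ => abs_nonneg _)]
    have h3 : (∑ k ∈ Finset.range n, ENNReal.ofReal |φ (z (k + 1)) - φ (z k)|)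
        = ∑ k ∈ Finset.range n, edist (φ (z (k + 1))) (φ (z k)) := by
      refine Finset.sum_congr rfl (fun k _ => ?_)
      rw [edist_dist, Real.dist_eq]
    rw [h3]
    exact key.trans (le_iSup_of_le ⟨γ, hγprop⟩ le_rfl)
  have h4 := (ENNReal.ofReal_le_iff_le_toReal hfin).mp h2
  refine le_trans ?_ h4
  exact Finset.sum_le_sum (fun k _ => max_le (le_abs_self _) (abs_nonneg _))

lemma chainSet_bddAbove (φ : (Fin d → ℝ) → ℝ) (h : MemABV φ) {p q : Fin d → ℝ} (hpq : p ≤ q) :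
    BddAbove (chainSet φ p q) :=
  ⟨_, fun s hs => chainSet_le φ h hpq s hs⟩

/-- Appending a point to chains: `P p r ≥ P p q + (φ r - φ q)⁺` for `p ≤ q ≤ r`. -/
lemma Pfun_append (φ : (Fin d → ℝ) → ℝ) (h : MemABV φ) {p q r : Fin d → ℝ}
    (hpq : p ≤ q) (hqr : q ≤ r) :
    Pfun φ p q + max (φ r - φ q) 0 ≤ Pfun φ p r := by
  have hpr : p ≤ r := hpq.trans hqr
  have step : ∀ s ∈ chainSet φ p q, s + max (φ r - φ q) 0 ∈ chainSet φ p r := by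
    rintro s ⟨n, z, hz, hz0, hzn, rfl⟩
    have hzq : ∀ k, z k ≤ q := by
      intro k
      rcases le_or_gt n k with hk | hk
      · exact (hzn k hk).le
      · rw [← hzn n le_rfl]; exact hz hk.le
    refine ⟨n + 1, fun k => if k ≤ n then z k else r, ?_, ?_, ?_, ?_⟩
    · intro j k hjk
      dsimp only
      split_ifs with hj hk hk
      · exact hz hjk
      · exact (hzq j).trans hqr
      · omega
      · exact le_rfl
    · simp only [if_pos (Nat.zero_le n)]; exact hz0
    · intro k hk
      simp only [if_neg (by omega : ¬ k ≤ n)]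
    · rw [Finset.sum_range_succ]
      have e1 : ∀ k ∈ Finset.range n,
          max (φ (if k + 1 ≤ n then z (k + 1) else r) - φ (if k ≤ n then z k else r)) 0
          = max (φ (z (k + 1)) - φ (z k)) 0 := by
        intro k hk
        have hk' := Finset.mem_range.mp hk
        rw [if_pos (by omega : k + 1 ≤ n), if_pos (by omega : k ≤ n)]
      rw [Finset.sum_congr rfl e1]
      congr 1
      simp only [if_neg (show ¬ n + 1 ≤ n by omega), if_pos (le_refl n), hzn n le_rfl]
  have h1 : Pfun φ p q ≤ Pfun φ p r - max (φ r - φ q) 0 := by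
    refine csSup_le (chainSet_nonempty φ hpq) ?_
    intro s hs
    have hle := le_csSup (chainSet_bddAbove φ h hpr) (step s hs)
    have hPr : Pfun φ p r = sSup (chainSet φ p r) := rfl
    linarith
  linarith

/-- The index set for the global variation function. -/
def SS (φ : (Fin d → ℝ) → ℝ) (x : Fin d → ℝ) : Set ℝ :=
  {v | ∃ N : ℕ, (∀ i, -(N:ℝ) ≤ x i) ∧
    v = Pfun φ (fun _ => -(N:ℝ)) x - Pfun φ (fun _ => -(N:ℝ)) (fun _ => (N:ℝ))}

lemma exists_nat_bound (x : Fin d → ℝ) : ∃ N : ℕ, ∀ i, |x i| ≤ N := by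
  obtain ⟨N, hN⟩ := exists_nat_ge (∑ i, |x i|)
  refine ⟨N, fun i => ?_⟩
  exact le_trans (Finset.single_le_sum (f := fun j => |x j|)
    (fun j _ => abs_nonneg _) (Finset.mem_univ i)) hN

lemma SS_nonempty (φ : (Fin d → ℝ) → ℝ) (x : Fin d → ℝ) : (SS φ x).Nonempty := by
  obtain ⟨N, hN⟩ := exists_nat_bound x
  exact ⟨_, N, fun i => (neg_le_neg (hN i)).trans (neg_abs_le _), rfl⟩

lemma SS_bddAbove (φ : (Fin d → ℝ) → ℝ) (h : MemABV φ) (x : Fin d → ℝ) :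
    BddAbove (SS φ x) := by
  obtain ⟨M, hM⟩ := exists_nat_bound x
  refine ⟨∑ N ∈ Finset.range M, max (Pfun φ (fun _ => -(N:ℝ)) x
      - Pfun φ (fun _ => -(N:ℝ)) (fun _ => (N:ℝ))) 0, ?_⟩
  rintro v ⟨N, hN, rfl⟩
  by_cases hNM : N < M
  · refine le_trans (le_max_left _ 0) (Finset.single_le_sum
      (f := fun j : ℕ => max (Pfun φ (fun _ => -(j:ℝ)) x
        - Pfun φ (fun _ => -(j:ℝ)) (fun _ => (j:ℝ))) 0)
      (fun j _ => le_max_right _ 0) (Finset.mem_range.mpr hNM))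
  · have hxN : x ≤ (fun _ => (N:ℝ)) := by
      intro i
      have h1 : x i ≤ |x i| := le_abs_self _
      have h2 : (M:ℝ) ≤ N := by exact_mod_cast Nat.cast_le.mpr (by omega : M ≤ N)
      exact h1.trans ((hM i).trans h2)
    have happ := Pfun_append φ h (p := fun _ => -(N:ℝ)) (q := x) (r := fun _ => (N:ℝ))
      (fun i => hN i) hxN
    have hmax := le_max_right (φ (fun _ => (N:ℝ)) - φ x) 0
    have hnn : (0:ℝ) ≤ ∑ N ∈ Finset.range M, max (Pfun φ (fun _ => -(N:ℝ)) x
        - Pfun φ (fun _ => -(N:ℝ)) (fun _ => (N:ℝ))) 0 :=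
      Finset.sum_nonneg (fun j _ => le_max_right _ 0)
    linarith

/-- The global variation function. -/
noncomputable def Vfun (φ : (Fin d → ℝ) → ℝ) (x : Fin d → ℝ) : ℝ :=
  sSup (SS φ x)

lemma Vfun_key (φ : (Fin d → ℝ) → ℝ) (h : MemABV φ) {x y : Fin d → ℝ} (hxy : x ≤ y) :
    Vfun φ x + max (φ y - φ x) 0 ≤ Vfun φ y := by
  have h1 : Vfun φ x ≤ Vfun φ y - max (φ y - φ x) 0 := by
    refine csSup_le (SS_nonempty φ x) ?_
    rintro v ⟨N, hN, rfl⟩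
    have hN' : ∀ i, -(N:ℝ) ≤ y i := fun i => (hN i).trans (hxy i)
    have happ := Pfun_append φ h (p := fun _ => -(N:ℝ)) (q := x) (r := y)
      (fun i => hN i) hxy
    have hmem : Pfun φ (fun _ => -(N:ℝ)) y - Pfun φ (fun _ => -(N:ℝ)) (fun _ => (N:ℝ))
        ∈ SS φ y := ⟨N, hN', rfl⟩
    have hle := le_csSup (SS_bddAbove φ h y) hmem
    have : Vfun φ y = sSup (SS φ y) := rfl
    linarith
  linarith

end Stmt1Aux

/-- `φ : ℝ^d → ℝ` belongs to `ABV(ℝ^d)` if and only if it is the difference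
of two functions that are increasing with respect to the coordinatewise order. -/
theorem stmt1 {d : ℕ} (φ : (Fin d → ℝ) → ℝ) :
    MemABV φ ↔ ∃ φ₁ φ₂ : (Fin d → ℝ) → ℝ,
      Monotone φ₁ ∧ Monotone φ₂ ∧ φ = φ₁ - φ₂ := by
  constructor
  · intro h
    refine ⟨Stmt1Aux.Vfun φ, fun x => Stmt1Aux.Vfun φ x - φ x, ?_, ?_, ?_⟩
    · intro x y hxy
      have := Stmt1Aux.Vfun_key φ h hxy
      have h0 := le_max_right (φ y - φ x) 0
      linarith
    · intro x y hxy
      have := Stmt1Aux.Vfun_key φ h hxy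
      have h0 := le_max_left (φ y - φ x) 0
      simp only
      linarith
    · funext x
      simp only [Pi.sub_apply]
      ring
  · rintro ⟨φ₁, φ₂, h₁, h₂, rfl⟩
    intro a b hab
    set C : ℝ := (φ₁ b - φ₁ a) + (φ₂ b - φ₂ a) with hC
    refine lt_of_le_of_lt (iSup_le ?_) (ENNReal.ofReal_lt_top : ENNReal.ofReal C < ⊤)
    rintro ⟨γ, hmono, hmem⟩
    unfold eVariationOn
    refine iSup_le ?_
    rintro ⟨n, u, hu, us⟩
    dsimp only
    have hγle : ∀ i j : ℕ, i ≤ j → γ (u i) ≤ γ (u j) := by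
      intro i j hij k
      exact hmono k (us i) (us j) (hu hij)
    have hγab : ∀ i : ℕ, a ≤ γ (u i) ∧ γ (u i) ≤ b := by
      intro i
      constructor
      · intro k; exact (hmem (u i) (us i) k).1
      · intro k; exact (hmem (u i) (us i) k).2
    have hA : ∀ i j : ℕ, i ≤ j → φ₁ (γ (u i)) ≤ φ₁ (γ (u j)) :=
      fun i j hij => h₁ (hγle i j hij)
    have hB : ∀ i j : ℕ, i ≤ j → φ₂ (γ (u i)) ≤ φ₂ (γ (u j)) :=
      fun i j hij => h₂ (hγle i j hij)
    calc (∑ k ∈ Finset.range n, edist (((φ₁ - φ₂) ∘ γ) (u (k + 1))) (((φ₁ - φ₂) ∘ γ) (u k)))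
        ≤ ∑ k ∈ Finset.range n, ENNReal.ofReal
            ((φ₁ (γ (u (k + 1))) - φ₁ (γ (u k))) + (φ₂ (γ (u (k + 1))) - φ₂ (γ (u k)))) := by
          refine Finset.sum_le_sum ?_
          intro k hk
          rw [edist_dist, Real.dist_eq]
          apply ENNReal.ofReal_le_ofReal
          have hA1 := hA k (k+1) (by omega)
          have hB1 := hB k (k+1) (by omega)
          simp only [Function.comp_apply, Pi.sub_apply]
          rw [abs_le]
          constructor <;> linarith
      _ = ENNReal.ofReal (∑ k ∈ Finset.range n,
            ((φ₁ (γ (u (k + 1))) - φ₁ (γ (u k))) + (φ₂ (γ (u (k + 1))) - φ₂ (γ (u k))))) := by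
          rw [ENNReal.ofReal_sum_of_nonneg]
          intro k hk
          have := hA k (k+1) (by omega)
          have := hB k (k+1) (by omega)
          linarith
      _ ≤ ENNReal.ofReal C := by
          apply ENNReal.ofReal_le_ofReal
          rw [Finset.sum_add_distrib, Finset.sum_range_sub (fun k => φ₁ (γ (u k))),
            Finset.sum_range_sub (fun k => φ₂ (γ (u k)))]
          have ha0 := (hγab 0).1
          have hb0 := (hγab n).2
          have h1 := h₁ ha0
          have h2 := h₁ hb0
          have h3 := h₂ ha0
          have h4 := h₂ hb0
          rw [hC]
          linarith
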